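/- Fix T > 0 and Q > 0. Let η > 0 be a constant and let θ : [0,T] → ℝ be continuously differentiable with θ'(t) ≤ 0 for all t. Let θ̄ > 0 be a constant with θ̄ ≥ −θ'(t) for all t ∈ [0,T], set γ = θ̄/(2η), and assume √γ·T < π. If ζ : [0,T] → ℝ is twice continuously differentiable and satisfies 2η·ζ''(t) − θ'(t)ζ(t) = 0 for all t ∈ [0,T], ζ(0) = Q, and ζ(T) = 0, then ζ(t) ≥ 0 for all t, ζ is concave (ζ''(t) ≤ 0 for all t), and ζ(t) ≥ Q·(1 − t/T) for all t ∈ [0,T] (the solution is bounded below by the TWAP strategy). -/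

import Mathlib

set_option maxHeartbeats 1000000


open Set MeasureTheory Real

/-- With constant temporary impact `η > 0` and nonincreasing permanent
impact `θ`, if `θ̄ > 0` satisfies `θ̄ ≥ −θ'` on `[0,T]`, `γ = θ̄/(2η)`, and `√γ·T < π`, then
any twice continuously differentiable solution of `2η ζ'' − θ' ζ = 0`, `ζ(0) = Q > 0`,
`ζ(T) = 0` is nonnegative, concave, and bounded below by the TWAP strategy. -/
theorem stmt16 (T Q : ℝ) (hT : 0 < T) (hQ : 0 < Q)
    (η : ℝ) (hη : 0 < η)
    (θ θ' : ℝ → ℝ)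
    (hθ : ∀ t ∈ Set.Icc 0 T, HasDerivAt θ (θ' t) t)
    (hθ'c : ContinuousOn θ' (Set.Icc 0 T))
    (hθ'nonpos : ∀ t ∈ Set.Icc 0 T, θ' t ≤ 0)
    (θbar : ℝ) (hθbar : 0 < θbar)
    (hθbar' : ∀ t ∈ Set.Icc 0 T, -θ' t ≤ θbar)
    (hγ : Real.sqrt (θbar / (2 * η)) * T < Real.pi)
    (ζ ζ' ζ'' : ℝ → ℝ)
    (hζ1 : ∀ t ∈ Set.Icc 0 T, HasDerivAt ζ (ζ' t) t)
    (hζ2 : ∀ t ∈ Set.Icc 0 T, HasDerivAt ζ' (ζ'' t) t)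
    (hζ''c : ContinuousOn ζ'' (Set.Icc 0 T))
    (hODE : ∀ t ∈ Set.Icc 0 T, 2 * η * ζ'' t - θ' t * ζ t = 0)
    (hζ0 : ζ 0 = Q) (hζT : ζ T = 0) :
    (∀ t ∈ Set.Icc 0 T, 0 ≤ ζ t) ∧
    (∀ t ∈ Set.Icc 0 T, ζ'' t ≤ 0) ∧
    (∀ t ∈ Set.Icc 0 T, Q * (1 - t / T) ≤ ζ t) := by
  have h2η : (0:ℝ) < 2 * η := by linarith
  have hγpos : 0 < θbar / (2 * η) := div_pos hθbar h2η
  set s : ℝ := Real.sqrt (θbar / (2 * η)) with hsdef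
  have hs : 0 < s := Real.sqrt_pos.mpr hγpos
  have hs2 : s ^ 2 = θbar / (2 * η) := Real.sq_sqrt hγpos.le
  set φ : ℝ → ℝ := fun t => Real.cos (s * (t - T / 2)) with hφdef
  set φd : ℝ → ℝ := fun t => -(Real.sin (s * (t - T / 2)) * s) with hφddef
  have hlin : ∀ t : ℝ, HasDerivAt (fun t => s * (t - T / 2)) s t := by
    intro t
    simpa using ((hasDerivAt_id t).sub_const (T / 2)).const_mul s
  have hφ : ∀ t : ℝ, HasDerivAt φ (φd t) t := by
    intro t
    exact ((Real.hasDerivAt_cos (s * (t - T / 2))).comp t (hlin t)).congr_deriv (show _ = φd t by rw [hφddef]; ring)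
  have hφd : ∀ t : ℝ, HasDerivAt φd (-(θbar / (2 * η) * φ t)) t := by
    intro t
    have h2 : HasDerivAt φd (-(Real.cos (s * (t - T / 2)) * s * s)) t := by
      have h1 := ((Real.hasDerivAt_sin (s * (t - T / 2))).comp t (hlin t)).mul_const s
      exact h1.neg
    convert h2 using 1
    simp only [hφdef]
    rw [← hs2]
    ring
  have hφc : Continuous φ := by
    apply Real.continuous_cos.comp
    continuity
  have hφpos : ∀ t ∈ Set.Icc (0:ℝ) T, 0 < φ t := by
    intro t ht
    apply Real.cos_pos_of_mem_Ioo
    have h1 : 0 ≤ s * t := mul_nonneg hs.le ht.1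
    have h2 : s * t ≤ s * T := mul_le_mul_of_nonneg_left ht.2 hs.le
    constructor
    · have : s * (t - T / 2) = s * t - s * T / 2 := by ring
      rw [this]; nlinarith
    · have : s * (t - T / 2) = s * t - s * T / 2 := by ring
      rw [this]; nlinarith
  have hζc : ContinuousOn ζ (Set.Icc 0 T) :=
    fun t ht => (hζ1 t ht).continuousAt.continuousWithinAt
  have hζ'cont : ContinuousOn ζ' (Set.Icc 0 T) :=
    fun t ht => (hζ2 t ht).continuousAt.continuousWithinAt
  -- second derivative formula
  have hODE' : ∀ t ∈ Set.Icc (0:ℝ) T, ζ'' t = θ' t * ζ t / (2 * η) := by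
    intro t ht
    have := hODE t ht
    field_simp
    linarith
  -- Step 1: nonnegativity
  have hnn : ∀ t ∈ Set.Icc (0:ℝ) T, 0 ≤ ζ t := by
    by_contra hcon
    push_neg at hcon
    obtain ⟨t1, ht1, hneg⟩ := hcon
    set g : ℝ → ℝ := fun t => ζ t / φ t with hgdef
    have hgc : ContinuousOn g (Set.Icc 0 T) :=
      hζc.div hφc.continuousOn (fun t ht => (hφpos t ht).ne')
    obtain ⟨t0, ht0mem, ht0min⟩ :=
      isCompact_Icc.exists_isMinOn ⟨0, left_mem_Icc.mpr hT.le⟩ hgc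
    have hg0 : 0 < g 0 := by
      have := hφpos 0 (left_mem_Icc.mpr hT.le)
      have : 0 < ζ 0 / φ 0 := div_pos (by rw [hζ0]; exact hQ) this
      simpa [hgdef] using this
    have hgT : g T = 0 := by simp [hgdef, hζT]
    have hgt1 : g t1 < 0 := div_neg_of_neg_of_pos hneg (hφpos t1 ht1)
    have hmin_neg : g t0 < 0 := lt_of_le_of_lt (ht0min ht1) hgt1
    have ht0Ioo : t0 ∈ Set.Ioo (0:ℝ) T := by
      rcases ht0mem.1.lt_or_eq with h | h
      · rcases ht0mem.2.lt_or_eq with h' | h'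
        · exact ⟨h, h'⟩
        · exfalso; rw [h'] at hmin_neg; rw [hgT] at hmin_neg; exact absurd hmin_neg (lt_irrefl 0)
      · exfalso; rw [← h] at hmin_neg; linarith
    set u : ℝ → ℝ := fun t => ζ' t * φ t - ζ t * φd t with hudef
    have hg' : ∀ t ∈ Set.Icc (0:ℝ) T, HasDerivAt g (u t / φ t ^ 2) t := by
      intro t ht
      exact (hζ1 t ht).div (hφ t) (hφpos t ht).ne'
    have hu0 : u t0 = 0 := by
      have hloc : IsLocalMin g t0 := ht0min.isLocalMin (Icc_mem_nhds ht0Ioo.1 ht0Ioo.2)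
      have hz := hloc.hasDerivAt_eq_zero (hg' t0 ht0mem)
      have hφ0 : φ t0 ≠ 0 := (hφpos t0 ht0mem).ne'
      field_simp at hz
      simpa using hz
    have hu : ∀ t ∈ Set.Icc (0:ℝ) T,
        HasDerivAt u (ζ t * φ t * (θ' t + θbar) / (2 * η)) t := by
      intro t ht
      have h1 := ((hζ2 t ht).mul (hφ t)).sub ((hζ1 t ht).mul (hφd t))
      refine h1.congr_deriv ?_
      rw [hODE' t ht]
      field_simp
      ring
    have hζt0 : ζ t0 < 0 := by
      by_contra h
      push_neg at h
      have : 0 ≤ g t0 := div_nonneg h (hφpos t0 ht0mem).le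
      linarith
    -- first zero of ζ after t0
    set Z : Set ℝ := Set.Icc t0 T ∩ ζ ⁻¹' {0} with hZdef
    have hZclosed : IsClosed Z := by
      have hsub : Set.Icc t0 T ⊆ Set.Icc 0 T := Set.Icc_subset_Icc ht0mem.1 le_rfl
      exact (hζc.mono hsub).preimage_isClosed_of_isClosed isClosed_Icc isClosed_singleton
    have hTZ : T ∈ Z := ⟨⟨ht0mem.2, le_rfl⟩, by simp [hζT]⟩
    set b : ℝ := sInf Z with hbdef
    have hbZ : b ∈ Z := hZclosed.csInf_mem ⟨T, hTZ⟩ ⟨t0, fun x hx => hx.1.1⟩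
    have hζb : ζ b = 0 := hbZ.2
    have ht0b : t0 < b := by
      rcases hbZ.1.1.lt_or_eq with h | h
      · exact h
      · exfalso; rw [← h] at hζb; linarith
    have hbT : b ≤ T := hbZ.1.2
    have hIccsub : Set.Icc t0 b ⊆ Set.Icc 0 T :=
      Set.Icc_subset_Icc ht0mem.1 hbT
    have hζnonpos : ∀ t ∈ Set.Icc t0 b, ζ t ≤ 0 := by
      intro t ht
      by_contra h
      push_neg at h
      have htb : t < b := by
        rcases ht.2.lt_or_eq with h' | h'
        · exact h'
        · exfalso; rw [h'] at h; linarith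
      have hivt := intermediate_value_Icc ht.1
        (hζc.mono (Set.Icc_subset_Icc ht0mem.1 (le_trans ht.2 hbT)))
      have h0mem : (0:ℝ) ∈ Set.Icc (ζ t0) (ζ t) := ⟨hζt0.le, h.le⟩
      obtain ⟨c, hc, hζc0⟩ := hivt h0mem
      have hcZ : c ∈ Z := ⟨⟨hc.1, le_trans hc.2 (le_trans htb.le hbT)⟩, by simp [hζc0]⟩
      have : b ≤ c := csInf_le ⟨t0, fun x hx => hx.1.1⟩ hcZ
      linarith [hc.2]
    have husub : ∀ t ∈ Set.Icc t0 b, u t ≤ 0 := by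
      intro t ht
      rcases ht.1.lt_or_eq with h | h
      · have hcontu : ContinuousOn u (Set.Icc t0 t) := by
          intro x hx
          exact (hu x (hIccsub ⟨hx.1, le_trans hx.2 ht.2⟩)).continuousAt.continuousWithinAt
        obtain ⟨c, hc, hceq⟩ := exists_hasDerivAt_eq_slope u
          (fun t => ζ t * φ t * (θ' t + θbar) / (2 * η)) h hcontu
          (fun x hx => hu x (hIccsub ⟨hx.1.le, le_trans hx.2.le ht.2⟩))
        have hcIcc : c ∈ Set.Icc t0 b := ⟨hc.1.le, le_trans hc.2.le ht.2⟩
        have hζcn : ζ c ≤ 0 := hζnonpos c hcIcc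
        have hφcp : 0 < φ c := hφpos c (hIccsub hcIcc)
        have hθc : 0 ≤ θ' c + θbar := by
          have := hθbar' c (hIccsub hcIcc)
          linarith
        have hder : ζ c * φ c * (θ' c + θbar) / (2 * η) ≤ 0 := by
          apply div_nonpos_of_nonpos_of_nonneg _ h2η.le
          have : ζ c * φ c ≤ 0 := mul_nonpos_of_nonpos_of_nonneg hζcn hφcp.le
          exact mul_nonpos_of_nonpos_of_nonneg this hθc
        rw [hceq, hu0] at hder
        rw [div_nonpos_iff] at hder
        rcases hder with ⟨h1, h2⟩ | ⟨h1, h2⟩ <;> linarith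
      · rw [← h, hu0]
    -- MVT for g on [t0, b] gives contradiction
    have hcontg : ContinuousOn g (Set.Icc t0 b) := hgc.mono hIccsub
    obtain ⟨c, hc, hceq⟩ := exists_hasDerivAt_eq_slope g (fun t => u t / φ t ^ 2)
      ht0b hcontg (fun x hx => hg' x (hIccsub ⟨hx.1.le, hx.2.le⟩))
    have hgb : g b = 0 := by simp [hgdef, hζb]
    rw [hgb] at hceq
    have hgcn : u c / φ c ^ 2 ≤ 0 := by
      apply div_nonpos_of_nonpos_of_nonneg
      · exact husub c ⟨hc.1.le, hc.2.le⟩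
      · positivity
    rw [hceq] at hgcn
    rw [div_nonpos_iff] at hgcn
    rcases hgcn with ⟨h1, h2⟩ | ⟨h1, h2⟩ <;> linarith
  -- Step 2: concavity
  have hconc : ∀ t ∈ Set.Icc (0:ℝ) T, ζ'' t ≤ 0 := by
    intro t ht
    rw [hODE' t ht]
    apply div_nonpos_of_nonpos_of_nonneg _ h2η.le
    exact mul_nonpos_of_nonpos_of_nonneg (hθ'nonpos t ht) (hnn t ht)
  refine ⟨hnn, hconc, ?_⟩
  -- Step 3: TWAP bound
  intro t ht
  by_contra hcon
  push_neg at hcon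
  set w : ℝ → ℝ := fun x => ζ x - Q * (1 - x / T) with hwdef
  have hlind : ∀ x : ℝ, HasDerivAt (fun x => Q * (1 - x / T)) (-(Q / T)) x := by
    intro x
    have h1 : HasDerivAt (fun x : ℝ => Q * (x / T)) (Q * (1 / T)) x := by
      simpa using ((hasDerivAt_id x).div_const T).const_mul Q
    have h2 := h1.const_sub Q
    have h3 : HasDerivAt (fun x : ℝ => Q - Q * (x / T)) (-(Q / T)) x := by
      exact h2.congr_deriv (by ring)
    convert h3 using 2 with x
    ring
  have hw : ∀ x ∈ Set.Icc (0:ℝ) T, HasDerivAt w (ζ' x + Q / T) x := by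
    intro x hx
    have := (hζ1 x hx).sub (hlind x)
    exact this.congr_deriv (by ring)
  have hw0 : w 0 = 0 := by simp [hwdef, hζ0]
  have hwT : w T = 0 := by
    simp [hwdef, hζT]
    right; simp [hT.ne']
  have hwt : w t < 0 := by
    simp only [hwdef]
    linarith
  have ht0 : 0 < t := by
    rcases ht.1.lt_or_eq with h | h
    · exact h
    · exfalso; rw [← h] at hwt; linarith
  have htT : t < T := by
    rcases ht.2.lt_or_eq with h | h
    · exact h
    · exfalso; rw [h] at hwt; linarith
  have hcontw : ContinuousOn w (Set.Icc 0 T) := by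
    intro x hx
    exact (hw x hx).continuousAt.continuousWithinAt
  -- MVT on [0, t]
  obtain ⟨a, ha, haeq⟩ := exists_hasDerivAt_eq_slope w (fun x => ζ' x + Q / T) ht0
    (hcontw.mono (Set.Icc_subset_Icc le_rfl ht.2))
    (fun x hx => hw x ⟨hx.1.le, le_trans hx.2.le ht.2⟩)
  rw [hw0] at haeq
  have hwa : ζ' a + Q / T < 0 := by
    rw [haeq]
    simp only [sub_zero]
    exact div_neg_of_neg_of_pos (by linarith) ht0
  -- MVT on [t, T]
  obtain ⟨b, hb, hbeq⟩ := exists_hasDerivAt_eq_slope w (fun x => ζ' x + Q / T) htT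
    (hcontw.mono (Set.Icc_subset_Icc ht.1 le_rfl))
    (fun x hx => hw x ⟨le_trans ht.1 hx.1.le, hx.2.le⟩)
  rw [hwT] at hbeq
  have hwb : 0 < ζ' b + Q / T := by
    rw [hbeq]
    apply div_pos _ (by linarith)
    linarith
  -- MVT for ζ' + Q/T on [a, b]
  have hab : a < b := lt_trans ha.2 hb.1
  have haIcc : a ∈ Set.Icc (0:ℝ) T := ⟨ha.1.le, le_trans ha.2.le ht.2⟩
  have hbIcc : b ∈ Set.Icc (0:ℝ) T := ⟨le_trans ht.1 hb.1.le, hb.2.le⟩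
  have habsub : Set.Icc a b ⊆ Set.Icc 0 T := Set.Icc_subset_Icc haIcc.1 hbIcc.2
  have hcontw' : ContinuousOn (fun x => ζ' x + Q / T) (Set.Icc a b) := by
    intro x hx
    exact ((hζ2 x (habsub hx)).continuousAt.add continuousAt_const).continuousWithinAt
  obtain ⟨c, hc, hceq⟩ := exists_hasDerivAt_eq_slope (fun x => ζ' x + Q / T) ζ'' hab
    hcontw' (fun x hx => by
      simpa using (hζ2 x (habsub ⟨hx.1.le, hx.2.le⟩)).add_const (Q / T))
  have hcIcc : c ∈ Set.Icc (0:ℝ) T := habsub ⟨hc.1.le, hc.2.le⟩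
  have h1 := hconc c hcIcc
  rw [hceq] at h1
  rw [div_nonpos_iff] at h1
  rcases h1 with ⟨h1, h2⟩ | ⟨h1, h2⟩ <;> linarith
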